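/- Let n, m, k, l be natural numbers, let G be an n×m complex matrix, let V be an n×k complex matrix with Vᴴ V = I, and let W be an m×l complex matrix with Wᴴ W = I. Then, in the L2 operator norm (spectral norm), ‖G − V Vᴴ G W Wᴴ‖² ≤ ‖G − V Vᴴ G‖² + ‖Gᴴ − W Wᴴ Gᴴ‖². -/

import Mathlib

open Matrix

/-- The L2 operator norm (spectral norm) of a rectangular complex matrix,
i.e. the operator norm of the induced linear map between Euclidean spaces. -/
noncomputable def l2OpNorm {n m : ℕ} (A : Matrix (Fin n) (Fin m) ℂ) : ℝ :=
  ‖LinearMap.toContinuousLinearMap (Matrix.toEuclideanLin A)‖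

section Aux

open scoped InnerProductSpace Matrix.Norms.L2Operator

lemma EuclideanSpace.inner_piLp_equiv_symm {ι : Type*} [Fintype ι] (x y : ι → ℂ) :
    inner ℂ ((WithLp.equiv 2 _).symm x) ((WithLp.equiv 2 _).symm y) = star x ⬝ᵥ y := by
  rw [WithLp.equiv_symm_apply, EuclideanSpace.inner_toLp_toLp, dotProduct_comm]

lemma WithLp.equiv_symm_add {ι : Type*} (x y : ι → ℂ) :
    (WithLp.equiv 2 _).symm (x + y) = (WithLp.equiv 2 _).symm x + (WithLp.equiv 2 _).symm y :=
  rfl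

variable {n m k : ℕ}

lemma aux_inner_mulVec_eq (A : Matrix (Fin n) (Fin m) ℂ) (B : Matrix (Fin n) (Fin k) ℂ)
    (x : Fin m → ℂ) (y : Fin k → ℂ) :
    (inner ℂ ((WithLp.equiv 2 _).symm (A *ᵥ x)) ((WithLp.equiv 2 _).symm (B *ᵥ y)) : ℂ)
      = star x ⬝ᵥ ((Aᴴ * B) *ᵥ y) := by
  rw [EuclideanSpace.inner_piLp_equiv_symm, star_mulVec, dotProduct_mulVec,
    vecMul_vecMul, ← dotProduct_mulVec]

lemma aux_mulVec_norm_eq (V : Matrix (Fin n) (Fin k) ℂ) (hV : Vᴴ * V = 1)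
    (z : Fin k → ℂ) :
    ‖(WithLp.equiv 2 _).symm (V *ᵥ z)‖
      = ‖((WithLp.equiv 2 (Fin k → ℂ)).symm z : EuclideanSpace ℂ (Fin k))‖ := by
  have h1 : RCLike.re (inner ℂ ((WithLp.equiv 2 _).symm (V *ᵥ z))
        ((WithLp.equiv 2 _).symm (V *ᵥ z)) : ℂ)
      = RCLike.re (inner ℂ ((WithLp.equiv 2 (Fin k → ℂ)).symm z)
        ((WithLp.equiv 2 (Fin k → ℂ)).symm z) : ℂ) := by
    rw [aux_inner_mulVec_eq, hV, EuclideanSpace.inner_piLp_equiv_symm, one_mulVec]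
  rw [inner_self_eq_norm_sq, inner_self_eq_norm_sq] at h1
  have := norm_nonneg ((WithLp.equiv 2 (Fin n → ℂ)).symm (V *ᵥ z) : EuclideanSpace ℂ (Fin n))
  have := norm_nonneg ((WithLp.equiv 2 (Fin k → ℂ)).symm z : EuclideanSpace ℂ (Fin k))
  nlinarith

lemma aux_mulVec_conjT_norm_le (V : Matrix (Fin n) (Fin k) ℂ) (hV : Vᴴ * V = 1)
    (y : Fin n → ℂ) :
    ‖(WithLp.equiv 2 _).symm (Vᴴ *ᵥ y)‖
      ≤ ‖((WithLp.equiv 2 (Fin n → ℂ)).symm y : EuclideanSpace ℂ (Fin n))‖ := by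
  set c := ‖((WithLp.equiv 2 (Fin k → ℂ)).symm (Vᴴ *ᵥ y) : EuclideanSpace ℂ (Fin k))‖ with hc
  have h1 : c ^ 2 = RCLike.re (inner ℂ ((WithLp.equiv 2 (Fin n → ℂ)).symm y)
      ((WithLp.equiv 2 _).symm ((V * Vᴴ) *ᵥ y)) : ℂ) := by
    rw [← inner_self_eq_norm_sq (𝕜 := ℂ)]
    congr 1
    simp only [EuclideanSpace.inner_piLp_equiv_symm, star_mulVec,
      conjTranspose_conjTranspose, ← mulVec_mulVec, dotProduct_mulVec]
  have h2 : c ^ 2 ≤ ‖((WithLp.equiv 2 (Fin n → ℂ)).symm y : EuclideanSpace ℂ (Fin n))‖ * c := by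
    rw [h1]
    calc RCLike.re (inner ℂ ((WithLp.equiv 2 (Fin n → ℂ)).symm y)
        ((WithLp.equiv 2 _).symm ((V * Vᴴ) *ᵥ y)) : ℂ)
        ≤ ‖(inner ℂ ((WithLp.equiv 2 (Fin n → ℂ)).symm y)
            ((WithLp.equiv 2 _).symm ((V * Vᴴ) *ᵥ y)) : ℂ)‖ := RCLike.re_le_norm _
      _ ≤ ‖((WithLp.equiv 2 (Fin n → ℂ)).symm y : EuclideanSpace ℂ (Fin n))‖
            * ‖((WithLp.equiv 2 (Fin n → ℂ)).symm ((V * Vᴴ) *ᵥ y) : EuclideanSpace ℂ (Fin n))‖ :=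
          norm_inner_le_norm _ _
      _ = _ := by
          rw [← mulVec_mulVec, aux_mulVec_norm_eq V hV]
  have hcn : 0 ≤ c := norm_nonneg _
  rcases hcn.lt_or_eq with h | h
  · exact le_of_mul_le_mul_right (by nlinarith) h
  · rw [← h]; exact norm_nonneg _

lemma aux_l2OpNorm_eq (A : Matrix (Fin n) (Fin m) ℂ) :
    l2OpNorm A = ‖A‖ := rfl

lemma aux_l2OpNorm_mulVec_le (A : Matrix (Fin n) (Fin m) ℂ) (x : Fin m → ℂ) :
    ‖(WithLp.equiv 2 (Fin n → ℂ)).symm (A *ᵥ x)‖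
      ≤ l2OpNorm A * ‖((WithLp.equiv 2 (Fin m → ℂ)).symm x : EuclideanSpace ℂ (Fin m))‖ := by
  have h := (LinearMap.toContinuousLinearMap (Matrix.toEuclideanLin A)).le_opNorm
    ((WithLp.equiv 2 (Fin m → ℂ)).symm x)
  simpa [l2OpNorm, Matrix.toEuclideanLin_apply_piLp_toLp] using h

lemma aux_l2OpNorm_le_bound (M : Matrix (Fin n) (Fin m) ℂ) (c : ℝ) (hc : 0 ≤ c)
    (h : ∀ x : Fin m → ℂ, ‖(WithLp.equiv 2 (Fin n → ℂ)).symm (M *ᵥ x)‖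
      ≤ c * ‖((WithLp.equiv 2 (Fin m → ℂ)).symm x : EuclideanSpace ℂ (Fin m))‖) :
    l2OpNorm M ≤ c := by
  apply ContinuousLinearMap.opNorm_le_bound _ hc
  intro x
  have h2 := h ((WithLp.equiv 2 (Fin m → ℂ)) x)
  simpa [Matrix.toEuclideanLin_apply] using h2

lemma aux_l2OpNorm_conjTranspose (A : Matrix (Fin n) (Fin m) ℂ) :
    l2OpNorm Aᴴ = l2OpNorm A := by
  rw [aux_l2OpNorm_eq, aux_l2OpNorm_eq, Matrix.l2_opNorm_conjTranspose]

lemma aux_l2OpNorm_nonneg (A : Matrix (Fin n) (Fin m) ℂ) : 0 ≤ l2OpNorm A :=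
  norm_nonneg _

end Aux

set_option maxHeartbeats 2000000 in
/-- The error of the two-sided projection `V Vᴴ G W Wᴴ` is controlled by the
row-basis error and the column-basis error (expressed via the adjoint matrix). -/
theorem two_sided_projection_error (n m k l : ℕ) (G : Matrix (Fin n) (Fin m) ℂ)
    (V : Matrix (Fin n) (Fin k) ℂ) (W : Matrix (Fin m) (Fin l) ℂ)
    (hV : Vᴴ * V = 1) (hW : Wᴴ * W = 1) :
    l2OpNorm (G - V * Vᴴ * G * W * Wᴴ) ^ 2
      ≤ l2OpNorm (G - V * Vᴴ * G) ^ 2 + l2OpNorm (Gᴴ - W * Wᴴ * Gᴴ) ^ 2 := by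
  set a := l2OpNorm (G - V * Vᴴ * G) with ha_def
  set b := l2OpNorm (Gᴴ - W * Wᴴ * Gᴴ) with hb_def
  have ha : 0 ≤ a := aux_l2OpNorm_nonneg _
  have hb : 0 ≤ b := aux_l2OpNorm_nonneg _
  set M₁ := G - V * Vᴴ * G with hM₁
  set M₂ := (V * Vᴴ) * (G - G * (W * Wᴴ)) with hM₂
  have hV' : ∀ {p : ℕ} (Z : Matrix (Fin k) (Fin p) ℂ), Vᴴ * (V * Z) = Z := by
    intro p Z; rw [← Matrix.mul_assoc, hV, Matrix.one_mul]
  -- the transposed column error matrix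
  have hQ : (G - G * (W * Wᴴ))ᴴ = Gᴴ - W * Wᴴ * Gᴴ := by
    simp [conjTranspose_sub, conjTranspose_mul, Matrix.mul_assoc]
  have hbQ : l2OpNorm (G - G * (W * Wᴴ)) = b := by
    rw [hb_def, ← hQ, aux_l2OpNorm_conjTranspose]
  -- decomposition
  have hsum : G - V * Vᴴ * G * W * Wᴴ = M₁ + M₂ := by
    rw [hM₁, hM₂, Matrix.mul_sub, sub_add_sub_cancel]
    simp only [Matrix.mul_assoc]
  -- orthogonality
  have hMM : M₁ᴴ * M₂ = 0 := by
    rw [hM₁, hM₂]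
    simp only [conjTranspose_sub, conjTranspose_mul, Matrix.sub_mul, Matrix.mul_assoc, hV']
    simp [← Matrix.mul_assoc, hV']
  have key : l2OpNorm (G - V * Vᴴ * G * W * Wᴴ) ≤ Real.sqrt (a ^ 2 + b ^ 2) := by
    apply aux_l2OpNorm_le_bound _ _ (Real.sqrt_nonneg _)
    intro x
    set X := ‖((WithLp.equiv 2 (Fin m → ℂ)).symm x : EuclideanSpace ℂ (Fin m))‖ with hX
    have hXn : 0 ≤ X := norm_nonneg _
    set u := ((WithLp.equiv 2 (Fin n → ℂ)).symm (M₁ *ᵥ x) : EuclideanSpace ℂ (Fin n)) with hu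
    set v := ((WithLp.equiv 2 (Fin n → ℂ)).symm (M₂ *ᵥ x) : EuclideanSpace ℂ (Fin n)) with hv
    have hiuv : (inner ℂ u v : ℂ) = 0 := by
      rw [hu, hv, aux_inner_mulVec_eq, hMM, Matrix.zero_mulVec, dotProduct_zero]
    have hnu : ‖u‖ ≤ a * X := aux_l2OpNorm_mulVec_le M₁ x
    have hnv : ‖v‖ ≤ b * X := by
      have h1 : M₂ *ᵥ x = V *ᵥ (Vᴴ *ᵥ ((G - G * (W * Wᴴ)) *ᵥ x)) := by
        rw [hM₂, ← Matrix.mulVec_mulVec, ← Matrix.mulVec_mulVec]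
      rw [hv, h1, aux_mulVec_norm_eq V hV]
      calc ‖((WithLp.equiv 2 (Fin k → ℂ)).symm (Vᴴ *ᵥ ((G - G * (W * Wᴴ)) *ᵥ x))
              : EuclideanSpace ℂ (Fin k))‖
          ≤ ‖((WithLp.equiv 2 (Fin n → ℂ)).symm ((G - G * (W * Wᴴ)) *ᵥ x)
              : EuclideanSpace ℂ (Fin n))‖ := aux_mulVec_conjT_norm_le V hV _
        _ ≤ b * X := by
            have := aux_l2OpNorm_mulVec_le (G - G * (W * Wᴴ)) x
            rwa [hbQ] at this
    have hdecomp : ((WithLp.equiv 2 (Fin n → ℂ)).symm ((G - V * Vᴴ * G * W * Wᴴ) *ᵥ x)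
        : EuclideanSpace ℂ (Fin n)) = u + v := by
      rw [hsum, Matrix.add_mulVec, hu, hv, WithLp.equiv_symm_add]
    rw [hdecomp]
    have hsq : ‖u + v‖ ^ 2 = ‖u‖ ^ 2 + ‖v‖ ^ 2 := by
      rw [norm_add_sq (𝕜 := ℂ), hiuv]
      simp
    have h2 : ‖u + v‖ ^ 2 ≤ (a ^ 2 + b ^ 2) * X ^ 2 := by
      rw [hsq]
      nlinarith [norm_nonneg u, norm_nonneg v]
    have hs : Real.sqrt (a ^ 2 + b ^ 2) ^ 2 = a ^ 2 + b ^ 2 :=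
      Real.sq_sqrt (by positivity)
    nlinarith [norm_nonneg (u + v), mul_nonneg (Real.sqrt_nonneg (a ^ 2 + b ^ 2)) hXn]
  have hfin := pow_le_pow_left₀ (aux_l2OpNorm_nonneg _) key 2
  rwa [Real.sq_sqrt (by positivity)] at hfin
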